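/- Let G^φ be a 3-regular connected mixed graph whose Hermitian-adjacency matrix H satisfies H² = 3I. Then the underlying graph G is isomorphic to either the complete graph K₄ or the 3-dimensional hypercube Q₃. -/

import Mathlib

open Matrix Finset

/-- The hypercube graph `Q_m`: vertices `{0,1}^m`, adjacent iff they differ in exactly
one coordinate. -/
def hypercubeGraph (m : ℕ) : SimpleGraph (Fin m → ZMod 2) where
  Adj u v := (Finset.univ.filter (fun i => u i ≠ v i)).card = 1
  symm := by
    constructor
    intro u v h
    simpa [ne_comm] using h
  loopless := by
    constructor
    intro u h
    simp at h

lemma sum_pm_one_even {α : Type*} [DecidableEq α] (s : Finset α) (f : α → ℝ)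
    (h : ∀ x ∈ s, f x = 1 ∨ f x = -1) (h0 : ∑ x ∈ s, f x = 0) : Even s.card := by
  classical
  set P := s.filter (fun x => f x = 1) with hP
  have hPs : P ⊆ s := Finset.filter_subset _ _
  have hsum : ∑ x ∈ s, f x = ∑ x ∈ P, f x + ∑ x ∈ s \ P, f x := by
    rw [Finset.sum_sdiff_eq_sub hPs]; ring
  have h1 : ∑ x ∈ P, f x = P.card := by
    rw [Finset.sum_congr rfl (fun x hx => (Finset.mem_filter.mp hx).2)]
    simp
    rfl
  have h2 : ∑ x ∈ s \ P, f x = -((s \ P).card : ℝ) := by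
    have hall : ∀ x ∈ s \ P, f x = -1 := by
      intro x hx
      have hxs := (Finset.mem_sdiff.mp hx).1
      have hxnP := (Finset.mem_sdiff.mp hx).2
      rcases h x hxs with h' | h'
      · exact absurd (Finset.mem_filter.mpr ⟨hxs, h'⟩) hxnP
      · exact h'
    rw [Finset.sum_congr rfl hall]
    simp [mul_comm]
  have hcards : (P.card : ℝ) = ((s \ P).card : ℝ) := by
    rw [hsum, h1, h2] at h0; linarith
  have hcard : P.card = (s \ P).card := Nat.cast_injective hcards
  have hsplit : s.card = P.card + (s \ P).card := by
    rw [Finset.card_sdiff_of_subset hPs]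
    have := Finset.card_le_card hPs
    omega
  rw [hsplit, ← hcard]
  exact Even.add_self _

lemma sum_units_even {α : Type*} [DecidableEq α] (s : Finset α) (f : α → ℂ)
    (h : ∀ x ∈ s, f x = 1 ∨ f x = -1 ∨ f x = Complex.I ∨ f x = -Complex.I)
    (h0 : ∑ x ∈ s, f x = 0) : Even s.card := by
  classical
  set P := s.filter (fun x => (f x).im = 0) with hPdef
  have hPs : P ⊆ s := Finset.filter_subset _ _
  have hre : ∀ x ∈ P, (f x).re = 1 ∨ (f x).re = -1 := by
    intro x hx
    have hxs := (Finset.mem_filter.mp hx).1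
    have hxim := (Finset.mem_filter.mp hx).2
    rcases h x hxs with h' | h' | h' | h' <;> rw [h'] at hxim ⊢ <;> simp_all [Complex.I_im]
  have him : ∀ x ∈ s \ P, (f x).im = 1 ∨ (f x).im = -1 := by
    intro x hx
    have hxs := (Finset.mem_sdiff.mp hx).1
    have hxnP := (Finset.mem_sdiff.mp hx).2
    have hxim : (f x).im ≠ 0 := by
      intro hc; exact hxnP (Finset.mem_filter.mpr ⟨hxs, hc⟩)
    rcases h x hxs with h' | h' | h' | h' <;> rw [h'] at hxim ⊢ <;> simp_all
  have hresum : ∑ x ∈ P, (f x).re = 0 := by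
    have : ∑ x ∈ s, (f x).re = 0 := by
      rw [← Complex.re_sum, h0, Complex.zero_re]
    rw [← Finset.sum_sdiff hPs] at this
    have hz : ∑ x ∈ s \ P, (f x).re = 0 := by
      apply Finset.sum_eq_zero
      intro x hx
      have hxs := (Finset.mem_sdiff.mp hx).1
      have hxim := him x hx
      rcases h x hxs with h' | h' | h' | h' <;> rw [h'] at hxim ⊢ <;> simp_all
    linarith
  have himsum : ∑ x ∈ s \ P, (f x).im = 0 := by
    have : ∑ x ∈ s, (f x).im = 0 := by
      rw [← Complex.im_sum, h0, Complex.zero_im]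
    rw [← Finset.sum_sdiff hPs] at this
    have hz : ∑ x ∈ P, (f x).im = 0 := by
      apply Finset.sum_eq_zero
      intro x hx
      exact (Finset.mem_filter.mp hx).2
    linarith
  have e1 : Even P.card := sum_pm_one_even P _ hre hresum
  have e2 : Even (s \ P).card := sum_pm_one_even _ _ him himsum
  have hsplit : s.card = P.card + (s \ P).card := by
    rw [Finset.card_sdiff_of_subset hPs]
    have := Finset.card_le_card hPs
    omega
  rw [hsplit]
  exact e1.add e2

lemma even_common {V : Type*} [Fintype V] [DecidableEq V] (G : SimpleGraph V) [DecidableRel G.Adj]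
    (H : Matrix V V ℂ)
    (hadj : ∀ u v, G.Adj u v → H u v ∈ ({1, Complex.I, -Complex.I} : Set ℂ))
    (hnadj : ∀ u v, ¬ G.Adj u v → H u v = 0)
    (hsq : H ^ 2 = (3 : ℂ) • (1 : Matrix V V ℂ)) :
    ∀ u v : V, u ≠ v → Even ((G.neighborFinset u ∩ G.neighborFinset v).card) := by
  intro u v huv
  have h0 : ∑ w, H u w * H w v = 0 := by
    have h := congrFun (congrFun hsq u) v
    rw [pow_two, Matrix.mul_apply] at h
    simpa [Matrix.smul_apply, Matrix.one_apply_ne huv] using h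
  set S := G.neighborFinset u ∩ G.neighborFinset v with hS
  have hsum : ∑ w ∈ S, H u w * H w v = 0 := by
    rw [← h0]
    apply Finset.sum_subset (Finset.subset_univ S)
    intro w _ hwS
    by_cases h1 : G.Adj u w
    · have h2 : ¬ G.Adj w v := by
        intro h2
        exact hwS (by simp [hS, SimpleGraph.mem_neighborFinset, h1, h2.symm])
      rw [hnadj w v h2, mul_zero]
    · rw [hnadj u w h1, zero_mul]
  apply sum_units_even S (fun w => H u w * H w v) ?_ hsum
  intro w hw
  rw [hS, Finset.mem_inter, SimpleGraph.mem_neighborFinset, SimpleGraph.mem_neighborFinset] at hw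
  have h1 := hadj u w hw.1
  have h2 := hadj w v hw.2.symm
  simp only [Set.mem_insert_iff, Set.mem_singleton_iff] at h1 h2
  rcases h1 with h1 | h1 | h1 <;> rcases h2 with h2 | h2 | h2 <;>
    simp only [h1, h2] <;> simp [Complex.I_mul_I]

lemma closed_conn {V : Type*} (G : SimpleGraph V) (hconn : G.Connected) (S : Set V)
    (hcl : ∀ a b, a ∈ S → G.Adj a b → b ∈ S) (u : V) (hu : u ∈ S) : ∀ z, z ∈ S := by
  intro z
  obtain ⟨w⟩ := hconn u z
  have key : ∀ {a b : V} (w : G.Walk a b), a ∈ S → b ∈ S := by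
    intro a b w
    induction w with
    | nil => exact id
    | cons h p ih => intro ha; exact ih (hcl _ _ ha h)
  exact key w hu

-- second common neighbour
lemma second_common {V : Type*} [Fintype V] [DecidableEq V] (G : SimpleGraph V)
    [DecidableRel G.Adj]
    (hP : ∀ u v : V, u ≠ v → Even ((G.neighborFinset u ∩ G.neighborFinset v).card))
    {u v w : V} (huv : u ≠ v) (h1 : G.Adj u w) (h2 : G.Adj v w) :
    ∃ x, x ≠ w ∧ G.Adj u x ∧ G.Adj v x := by
  have hw : w ∈ G.neighborFinset u ∩ G.neighborFinset v := by
    simp [SimpleGraph.mem_neighborFinset, h1, h2]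
  have heven := hP u v huv
  have hpos : 0 < (G.neighborFinset u ∩ G.neighborFinset v).card :=
    Finset.card_pos.mpr ⟨w, hw⟩
  have h2' : 1 < (G.neighborFinset u ∩ G.neighborFinset v).card := by
    rcases heven with ⟨k, hk⟩; omega
  obtain ⟨x, hx, hxw⟩ := Finset.exists_mem_ne h2' w
  rw [Finset.mem_inter, SimpleGraph.mem_neighborFinset, SimpleGraph.mem_neighborFinset] at hx
  exact ⟨x, hxw, hx.1, hx.2⟩

-- a 3-element subset of a card-3 finset is the whole thing
lemma eq_of_three {V : Type*} [DecidableEq V] {s : Finset V} (hs : s.card = 3)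
    {a b c : V} (hab : a ≠ b) (hac : a ≠ c) (hbc : b ≠ c)
    (ha : a ∈ s) (hb : b ∈ s) (hc : c ∈ s) : s = {a, b, c} := by
  symm
  apply Finset.eq_of_subset_of_card_le
  · intro z hz
    simp only [Finset.mem_insert, Finset.mem_singleton] at hz
    rcases hz with rfl | rfl | rfl <;> assumption
  · rw [hs, Finset.card_insert_of_notMem (by simp [hab, hac]),
      Finset.card_insert_of_notMem (by simp [hbc]), Finset.card_singleton]

-- three distinct common neighbours is impossible
lemma no_three_common {V : Type*} [Fintype V] [DecidableEq V] (G : SimpleGraph V)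
    [DecidableRel G.Adj] (hreg : ∀ v : V, G.degree v = 3)
    (hP : ∀ u v : V, u ≠ v → Even ((G.neighborFinset u ∩ G.neighborFinset v).card))
    {u v a b c : V} (huv : u ≠ v) (hab : a ≠ b) (hac : a ≠ c) (hbc : b ≠ c)
    (h1 : G.Adj u a) (h2 : G.Adj v a) (h3 : G.Adj u b) (h4 : G.Adj v b)
    (h5 : G.Adj u c) (h6 : G.Adj v c) : False := by
  have hsub : ({a, b, c} : Finset V) ⊆ G.neighborFinset u ∩ G.neighborFinset v := by
    intro z hz
    simp only [Finset.mem_insert, Finset.mem_singleton] at hz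
    rcases hz with rfl | rfl | rfl <;>
      simp [SimpleGraph.mem_neighborFinset, h1, h2, h3, h4, h5, h6]
  have hsub2 : G.neighborFinset u ∩ G.neighborFinset v ⊆ G.neighborFinset u :=
    Finset.inter_subset_left
  have hcard3 : ({a, b, c} : Finset V).card = 3 := by
    rw [Finset.card_insert_of_notMem (by simp [hab, hac]),
      Finset.card_insert_of_notMem (by simp [hbc]), Finset.card_singleton]
  have hle : (G.neighborFinset u ∩ G.neighborFinset v).card ≤ 3 := by
    have := Finset.card_le_card hsub2
    rwa [G.card_neighborFinset_eq_degree, hreg u] at this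
  have hge : 3 ≤ (G.neighborFinset u ∩ G.neighborFinset v).card := by
    have := Finset.card_le_card hsub
    omega
  obtain ⟨k, hk⟩ := hP u v huv
  omega

lemma caseA {V : Type*} [Fintype V] [DecidableEq V] (G : SimpleGraph V) [DecidableRel G.Adj]
    (hreg : ∀ v : V, G.degree v = 3) (hconn : G.Connected)
    (hP : ∀ u v : V, u ≠ v → Even ((G.neighborFinset u ∩ G.neighborFinset v).card))
    {u v w : V} (huv : G.Adj u v) (huw : G.Adj u w) (hvw : G.Adj v w) :
    Nonempty (G ≃g SimpleGraph.completeGraph (Fin 4)) := by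
  have hN3 : ∀ z : V, (G.neighborFinset z).card = 3 := by
    intro z; rw [G.card_neighborFinset_eq_degree]; exact hreg z
  obtain ⟨x, hxw, hux, hvx⟩ := second_common G hP huv.ne huw hvw
  have hNu : G.neighborFinset u = {v, w, x} :=
    eq_of_three (hN3 u) hvw.ne (hvx.ne) (fun h => hxw h.symm)
      (by simp [huv]) (by simp [huw]) (by simp [hux])
  have hNv : G.neighborFinset v = {u, w, x} :=
    eq_of_three (hN3 v) huw.ne (hux.ne) (fun h => hxw h.symm)
      (by simp [huv.symm]) (by simp [hvw]) (by simp [hvx])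
  have hwx : G.Adj w x := by
    by_contra hwx
    have hxw' : x ∉ G.neighborFinset w := fun h => hwx ((G.mem_neighborFinset w x).mp h)
    have hsub : ({u, v} : Finset V) ⊆ G.neighborFinset w := by
      intro z hz
      simp only [Finset.mem_insert, Finset.mem_singleton] at hz
      rcases hz with rfl | rfl <;> simp [huw.symm, hvw.symm]
    have hlt : ({u, v} : Finset V).card < (G.neighborFinset w).card := by
      rw [hN3 w, Finset.card_insert_of_notMem (by simp [huv.ne]), Finset.card_singleton]
      omega
    obtain ⟨y, hyNw, hynotuv⟩ := Finset.exists_of_ssubset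
      (hsub.ssubset_of_ne (fun e => by rw [e] at hlt; omega))
    simp only [Finset.mem_insert, Finset.mem_singleton, not_or] at hynotuv
    have hwy : G.Adj w y := (G.mem_neighborFinset w y).mp hyNw
    have hyx : y ≠ x := fun h => hwx (h ▸ hwy)
    obtain ⟨z, hzw, huz, hyz⟩ := second_common G hP
      (fun h : u = y => hynotuv.1 h.symm) huw hwy.symm
    have hzNu : z ∈ G.neighborFinset u := (G.mem_neighborFinset _ _).mpr huz
    rw [hNu] at hzNu
    simp only [Finset.mem_insert, Finset.mem_singleton] at hzNu
    rcases hzNu with rfl | rfl | rfl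
    · -- z = v : then y ∈ N v = {u,w,x}, impossible
      have : y ∈ G.neighborFinset z := (G.mem_neighborFinset _ _).mpr hyz.symm
      rw [hNv] at this
      simp only [Finset.mem_insert, Finset.mem_singleton] at this
      rcases this with rfl | rfl | rfl
      · exact hynotuv.1 rfl
      · exact hwy.ne' rfl
      · exact hyx rfl
    · exact hzw rfl
    · -- z = x : x adj y, then common(w,x) ⊇ {u,v,y}
      exact no_three_common G hreg hP (fun h : w = _ => hxw h.symm)
        huv.ne (fun h : u = y => hynotuv.1 h.symm) (fun h : v = y => hynotuv.2 h.symm)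
        huw.symm hux.symm hvw.symm hvx.symm hwy hyz.symm
  have s1 := huv.symm; have s2 := huw.symm; have s3 := hvw.symm
  have s4 := hux.symm; have s5 := hvx.symm; have s6 := hwx.symm
  have hNw : G.neighborFinset w = {u, v, x} :=
    eq_of_three (hN3 w) huv.ne hux.ne hvx.ne (by simp [s2]) (by simp [s3]) (by simp [hwx])
  have hNx : G.neighborFinset x = {u, v, w} :=
    eq_of_three (hN3 x) huv.ne huw.ne hvw.ne (by simp [s4]) (by simp [s5]) (by simp [s6])
  have hall : ∀ z : V, z = u ∨ z = v ∨ z = w ∨ z = x := by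
    apply closed_conn G hconn {z | z = u ∨ z = v ∨ z = w ∨ z = x} ?_ u (Or.inl rfl)
    intro a b ha hab
    have hb : b ∈ G.neighborFinset a := (G.mem_neighborFinset _ _).mpr hab
    rcases ha with rfl | rfl | rfl | rfl <;>
      [rw [hNu] at hb; rw [hNv] at hb; rw [hNw] at hb; rw [hNx] at hb] <;>
      simp only [Finset.mem_insert, Finset.mem_singleton] at hb <;> tauto
  have hiff : ∀ p q : V, G.Adj p q ↔ p ≠ q := by
    intro p q
    constructor
    · exact fun h => h.ne
    · intro hpq
      rcases hall p with rfl | rfl | rfl | rfl <;> rcases hall q with rfl | rfl | rfl | rfl <;>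
        first | exact absurd rfl hpq | assumption
  have hcard : Fintype.card V = 4 := by
    have huniv : (Finset.univ : Finset V) = {u, v, w, x} := by
      symm; apply Finset.eq_univ_iff_forall.mpr
      intro z
      rcases hall z with rfl | rfl | rfl | rfl <;> simp
    rw [← Finset.card_univ, huniv,
      Finset.card_insert_of_notMem (by simp [huv.ne, huw.ne, hux.ne]),
      Finset.card_insert_of_notMem (by simp [hvw.ne, hvx.ne]),
      Finset.card_insert_of_notMem (by simp only [Finset.mem_singleton]; exact fun h => hxw h.symm),
      Finset.card_singleton]
  have e : V ≃ Fin 4 := Fintype.equivFinOfCardEq hcard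
  exact ⟨⟨e, by intro a b; simp [SimpleGraph.completeGraph, e.injective.ne_iff, hiff]⟩⟩

lemma no_second_center {V : Type*} [Fintype V] [DecidableEq V] (G : SimpleGraph V)
    [DecidableRel G.Adj] (hreg : ∀ v : V, G.degree v = 3)
    (hP : ∀ u v : V, u ≠ v → Even ((G.neighborFinset u ∩ G.neighborFinset v).card))
    (htf : ∀ p q r : V, G.Adj p q → G.Adj p r → ¬ G.Adj q r)
    {v0 a b c x : V} (hab : a ≠ b) (hac : a ≠ c) (hbc : b ≠ c)
    (hNv0 : G.neighborFinset v0 = {a, b, c})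
    (hxa : G.Adj x a) (hxb : G.Adj x b) (hxc : G.Adj x c) (hxv0 : x ≠ v0) : False := by
  have hN3 : ∀ z : V, (G.neighborFinset z).card = 3 := by
    intro z; rw [G.card_neighborFinset_eq_degree]; exact hreg z
  have hv0a : G.Adj v0 a := (G.mem_neighborFinset _ _).mp (by rw [hNv0]; simp)
  have hv0b : G.Adj v0 b := (G.mem_neighborFinset _ _).mp (by rw [hNv0]; simp)
  have hv0c : G.Adj v0 c := (G.mem_neighborFinset _ _).mp (by rw [hNv0]; simp)
  have hNx : G.neighborFinset x = {a, b, c} :=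
    eq_of_three (hN3 x) hab hac hbc (by simp [hxa]) (by simp [hxb]) (by simp [hxc])
  -- third neighbours of a, b, c
  have third : ∀ z : V, G.Adj v0 z → G.Adj x z →
      ∃ y, G.neighborFinset z = {v0, x, y} ∧ y ≠ v0 ∧ y ≠ x := by
    intro z h1 h2
    have hsub : ({v0, x} : Finset V) ⊆ G.neighborFinset z := by
      intro t ht
      simp only [Finset.mem_insert, Finset.mem_singleton] at ht
      rcases ht with rfl | rfl <;> simp [h1.symm, h2.symm]
    have hltc : ({v0, x} : Finset V).card < (G.neighborFinset z).card := by
      rw [hN3 z, Finset.card_insert_of_notMem (by simp [Ne.symm hxv0]), Finset.card_singleton]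
      omega
    obtain ⟨y, hy1, hy2⟩ := Finset.exists_of_ssubset
      (hsub.ssubset_of_ne (fun e => by rw [e] at hltc; omega))
    simp only [Finset.mem_insert, Finset.mem_singleton, not_or] at hy2
    exact ⟨y, eq_of_three (hN3 z) (Ne.symm hxv0) (Ne.symm hy2.1) (Ne.symm hy2.2)
      (by simp [h1.symm]) (by simp [h2.symm]) hy1, hy2.1, hy2.2⟩
  obtain ⟨ya, hNa, hya1, hya2⟩ := third a hv0a hxa
  obtain ⟨yb, hNb, hyb1, hyb2⟩ := third b hv0b hxb
  obtain ⟨yc, hNc, hyc1, hyc2⟩ := third c hv0c hxc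
  have haya : G.Adj a ya := (G.mem_neighborFinset _ _).mp (by rw [hNa]; simp)
  have hyayb : ya ≠ yb := by
    intro e
    have hbya : G.Adj b ya := by
      rw [e]; exact (G.mem_neighborFinset _ _).mp (by rw [hNb]; simp)
    exact no_three_common G hreg hP hab (Ne.symm hxv0) (Ne.symm hya1) (Ne.symm hya2)
      hv0a.symm hv0b.symm hxa.symm hxb.symm haya hbya
  have hyayc : ya ≠ yc := by
    intro e
    have hcya : G.Adj c ya := by
      rw [e]; exact (G.mem_neighborFinset _ _).mp (by rw [hNc]; simp)
    exact no_three_common G hreg hP hac (Ne.symm hxv0) (Ne.symm hya1) (Ne.symm hya2)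
      hv0a.symm hv0c.symm hxa.symm hxc.symm haya hcya
  -- common(v0, ya) has exactly one element a : contradiction
  obtain ⟨z, hza, hv0z, hyaz⟩ := second_common G hP (Ne.symm hya1) hv0a haya.symm
  have hzN : z ∈ G.neighborFinset v0 := (G.mem_neighborFinset _ _).mpr hv0z
  rw [hNv0] at hzN
  simp only [Finset.mem_insert, Finset.mem_singleton] at hzN
  rcases hzN with rfl | rfl | rfl
  · exact hza rfl
  · -- z = b : ya ∈ N b = {v0, x, yb}
    have : ya ∈ G.neighborFinset z := (G.mem_neighborFinset _ _).mpr hyaz.symm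
    rw [hNb] at this
    simp only [Finset.mem_insert, Finset.mem_singleton] at this
    rcases this with rfl | rfl | rfl
    · exact hya1 rfl
    · exact hya2 rfl
    · exact hyayb rfl
  · have : ya ∈ G.neighborFinset z := (G.mem_neighborFinset _ _).mpr hyaz.symm
    rw [hNc] at this
    simp only [Finset.mem_insert, Finset.mem_singleton] at this
    rcases this with rfl | rfl | rfl
    · exact hya1 rfl
    · exact hya2 rfl
    · exact hyayc rfl

set_option maxHeartbeats 1000000 in
lemma caseB {V : Type*} [Fintype V] [DecidableEq V] (G : SimpleGraph V) [DecidableRel G.Adj]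
    (hreg : ∀ v : V, G.degree v = 3) (hconn : G.Connected)
    (hP : ∀ u v : V, u ≠ v → Even ((G.neighborFinset u ∩ G.neighborFinset v).card))
    (htf : ∀ p q r : V, G.Adj p q → G.Adj p r → ¬ G.Adj q r) :
    Nonempty (G ≃g hypercubeGraph 3) := by
  have hN3 : ∀ z : V, (G.neighborFinset z).card = 3 := by
    intro z; rw [G.card_neighborFinset_eq_degree]; exact hreg z
  obtain ⟨v0⟩ := hconn.nonempty
  obtain ⟨a, b, c, hab, hac, hbc, hNv0⟩ := Finset.card_eq_three.mp (hN3 v0)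
  have hv0a : G.Adj v0 a := (G.mem_neighborFinset _ _).mp (by rw [hNv0]; simp)
  have hv0b : G.Adj v0 b := (G.mem_neighborFinset _ _).mp (by rw [hNv0]; simp)
  have hv0c : G.Adj v0 c := (G.mem_neighborFinset _ _).mp (by rw [hNv0]; simp)
  have nab : ¬ G.Adj a b := htf v0 a b hv0a hv0b
  have nac : ¬ G.Adj a c := htf v0 a c hv0a hv0c
  have nbc : ¬ G.Adj b c := htf v0 b c hv0b hv0c
  obtain ⟨x1, hx1v0, hax1, hbx1⟩ := second_common G hP hab hv0a.symm hv0b.symm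
  obtain ⟨x2, hx2v0, hax2, hcx2⟩ := second_common G hP hac hv0a.symm hv0c.symm
  obtain ⟨x3, hx3v0, hbx3, hcx3⟩ := second_common G hP hbc hv0b.symm hv0c.symm
  have hx1x2 : x1 ≠ x2 := fun e =>
    no_second_center G hreg hP htf hab hac hbc hNv0 hax1.symm hbx1.symm (e ▸ hcx2.symm) hx1v0
  have hx1x3 : x1 ≠ x3 := fun e =>
    no_second_center G hreg hP htf hab hac hbc hNv0 hax1.symm hbx1.symm (e ▸ hcx3.symm) hx1v0
  have hx2x3 : x2 ≠ x3 := fun e =>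
    no_second_center G hreg hP htf hab hac hbc hNv0 hax2.symm (e ▸ hbx3.symm) hcx2.symm hx2v0
  have nv0x1 : ¬ G.Adj v0 x1 := fun h => htf v0 a x1 hv0a h hax1
  have nv0x2 : ¬ G.Adj v0 x2 := fun h => htf v0 a x2 hv0a h hax2
  have nv0x3 : ¬ G.Adj v0 x3 := fun h => htf v0 b x3 hv0b h hbx3
  have hx1a : x1 ≠ a := fun e => G.irrefl (e ▸ hax1)
  have hx1b : x1 ≠ b := fun e => G.irrefl (e ▸ hbx1)
  have hx1c : x1 ≠ c := fun e => nac (e ▸ hax1)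
  have hx2a : x2 ≠ a := fun e => G.irrefl (e ▸ hax2)
  have hx2b : x2 ≠ b := fun e => nab (e ▸ hax2)
  have hx2c : x2 ≠ c := fun e => G.irrefl (e ▸ hcx2)
  have hx3a : x3 ≠ a := fun e => nab (e ▸ hbx3).symm
  have hx3b : x3 ≠ b := fun e => G.irrefl (e ▸ hbx3)
  have hx3c : x3 ≠ c := fun e => G.irrefl (e ▸ hcx3)
  have hNa : G.neighborFinset a = {v0, x1, x2} :=
    eq_of_three (hN3 a) (Ne.symm hx1v0) (Ne.symm hx2v0) hx1x2
      (by simp [hv0a.symm]) (by simp [hax1]) (by simp [hax2])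
  have hNb : G.neighborFinset b = {v0, x1, x3} :=
    eq_of_three (hN3 b) (Ne.symm hx1v0) (Ne.symm hx3v0) hx1x3
      (by simp [hv0b.symm]) (by simp [hbx1]) (by simp [hbx3])
  have hNc : G.neighborFinset c = {v0, x2, x3} :=
    eq_of_three (hN3 c) (Ne.symm hx2v0) (Ne.symm hx3v0) hx2x3
      (by simp [hv0c.symm]) (by simp [hcx2]) (by simp [hcx3])
  have nx1x2 : ¬ G.Adj x1 x2 := htf a x1 x2 hax1 hax2
  have nx1x3 : ¬ G.Adj x1 x3 := htf b x1 x3 hbx1 hbx3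
  have nx2x3 : ¬ G.Adj x2 x3 := htf c x2 x3 hcx2 hcx3
  -- third neighbour w of x1
  have hsub : ({a, b} : Finset V) ⊆ G.neighborFinset x1 := by
    intro t ht
    simp only [Finset.mem_insert, Finset.mem_singleton] at ht
    rcases ht with rfl | rfl <;> simp [hax1.symm, hbx1.symm]
  have hltc : ({a, b} : Finset V).card < (G.neighborFinset x1).card := by
    rw [hN3 x1, Finset.card_insert_of_notMem (by simp [hab]), Finset.card_singleton]
    omega
  obtain ⟨w, hw1, hw2⟩ := Finset.exists_of_ssubset
    (hsub.ssubset_of_ne (fun e => by rw [e] at hltc; omega))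
  simp only [Finset.mem_insert, Finset.mem_singleton, not_or] at hw2
  have hx1w : G.Adj x1 w := (G.mem_neighborFinset _ _).mp hw1
  have hwa : w ≠ a := hw2.1
  have hwb : w ≠ b := hw2.2
  have hwv0 : w ≠ v0 := fun e => nv0x1 (e ▸ hx1w).symm
  have hnadj : ∀ p q : V, q ∉ G.neighborFinset p → ¬ G.Adj p q :=
    fun p q hq h => hq ((G.mem_neighborFinset p q).mpr h)
  have ncx1 : ¬ G.Adj c x1 := hnadj _ _ (by
    rw [hNc]
    simp only [Finset.mem_insert, Finset.mem_singleton, not_or]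
    exact ⟨hx1v0, hx1x2, hx1x3⟩)
  have hwc : w ≠ c := fun e => ncx1 (e ▸ hx1w).symm
  have hNx1 : G.neighborFinset x1 = {a, b, w} :=
    eq_of_three (hN3 x1) hab (Ne.symm hwa) (Ne.symm hwb)
      (by simp [hax1.symm]) (by simp [hbx1.symm]) (by simp [hx1w])
  have hx2w : G.Adj x2 w := by
    obtain ⟨z, hza, hx2z, hx1z⟩ := second_common G hP (Ne.symm hx1x2) hax2.symm hax1.symm
    have hzN : z ∈ G.neighborFinset x1 := (G.mem_neighborFinset _ _).mpr hx1z
    rw [hNx1] at hzN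
    simp only [Finset.mem_insert, Finset.mem_singleton] at hzN
    rcases hzN with rfl | rfl | rfl
    · exact absurd rfl hza
    · exact absurd ((G.mem_neighborFinset _ _).mpr hx2z.symm)
        (by rw [hNb]
            simp only [Finset.mem_insert, Finset.mem_singleton, not_or]
            exact ⟨hx2v0, Ne.symm hx1x2, hx2x3⟩)
    · exact hx2z
  have hx3w : G.Adj x3 w := by
    obtain ⟨z, hzb, hx3z, hx1z⟩ := second_common G hP (Ne.symm hx1x3) hbx3.symm hbx1.symm
    have hzN : z ∈ G.neighborFinset x1 := (G.mem_neighborFinset _ _).mpr hx1z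
    rw [hNx1] at hzN
    simp only [Finset.mem_insert, Finset.mem_singleton] at hzN
    rcases hzN with rfl | rfl | rfl
    · exact absurd ((G.mem_neighborFinset _ _).mpr hx3z.symm)
        (by rw [hNa]
            simp only [Finset.mem_insert, Finset.mem_singleton, not_or]
            exact ⟨hx3v0, Ne.symm hx1x3, Ne.symm hx2x3⟩)
    · exact absurd rfl hzb
    · exact hx3z
  have hNx2 : G.neighborFinset x2 = {a, c, w} :=
    eq_of_three (hN3 x2) hac (Ne.symm hwa) (Ne.symm hwc)
      (by simp [hax2.symm]) (by simp [hcx2.symm]) (by simp [hx2w])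
  have hNx3 : G.neighborFinset x3 = {b, c, w} :=
    eq_of_three (hN3 x3) hbc (Ne.symm hwb) (Ne.symm hwc)
      (by simp [hbx3.symm]) (by simp [hcx3.symm]) (by simp [hx3w])
  have hNw : G.neighborFinset w = {x1, x2, x3} :=
    eq_of_three (hN3 w) hx1x2 hx1x3 hx2x3
      (by simp [hx1w.symm]) (by simp [hx2w.symm]) (by simp [hx3w.symm])
  -- remaining non-adjacencies
  have nv0w : ¬ G.Adj v0 w := hnadj _ _ (by
    rw [hNv0]; simp only [Finset.mem_insert, Finset.mem_singleton, not_or]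
    exact ⟨hwa, hwb, hwc⟩)
  have nax3 : ¬ G.Adj a x3 := hnadj _ _ (by
    rw [hNa]; simp only [Finset.mem_insert, Finset.mem_singleton, not_or]
    exact ⟨hx3v0, Ne.symm hx1x3, Ne.symm hx2x3⟩)
  have nbx2 : ¬ G.Adj b x2 := hnadj _ _ (by
    rw [hNb]; simp only [Finset.mem_insert, Finset.mem_singleton, not_or]
    exact ⟨hx2v0, Ne.symm hx1x2, hx2x3⟩)
  have naw : ¬ G.Adj a w := hnadj _ _ (by
    rw [hNa]; simp only [Finset.mem_insert, Finset.mem_singleton, not_or]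
    exact ⟨hwv0, hx1w.ne', hx2w.ne'⟩)
  have nbw : ¬ G.Adj b w := hnadj _ _ (by
    rw [hNb]; simp only [Finset.mem_insert, Finset.mem_singleton, not_or]
    exact ⟨hwv0, hx1w.ne', hx3w.ne'⟩)
  have ncw : ¬ G.Adj c w := hnadj _ _ (by
    rw [hNc]; simp only [Finset.mem_insert, Finset.mem_singleton, not_or]
    exact ⟨hwv0, hx2w.ne', hx3w.ne'⟩)
  have ncx1' : ¬ G.Adj c x1 := ncx1
  -- every vertex is one of the eight
  have hall : ∀ z : V, z = v0 ∨ z = a ∨ z = b ∨ z = c ∨ z = x1 ∨ z = x2 ∨ z = x3 ∨ z = w := by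
    apply closed_conn G hconn
      {z | z = v0 ∨ z = a ∨ z = b ∨ z = c ∨ z = x1 ∨ z = x2 ∨ z = x3 ∨ z = w} ?_ v0 (Or.inl rfl)
    intro p q hp hpq
    have hq : q ∈ G.neighborFinset p := (G.mem_neighborFinset _ _).mpr hpq
    rcases hp with rfl | rfl | rfl | rfl | rfl | rfl | rfl | rfl <;>
      [rw [hNv0] at hq; rw [hNa] at hq; rw [hNb] at hq; rw [hNc] at hq;
       rw [hNx1] at hq; rw [hNx2] at hq; rw [hNx3] at hq; rw [hNw] at hq] <;>
      simp only [Finset.mem_insert, Finset.mem_singleton] at hq <;>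
      rcases hq with rfl | rfl | rfl <;> simp [Set.mem_setOf_eq]
  -- the labelling map
  set f : V → (Fin 3 → ZMod 2) := fun z =>
    if z = v0 then ![0,0,0] else if z = a then ![1,0,0] else if z = b then ![0,1,0]
    else if z = c then ![0,0,1] else if z = x1 then ![1,1,0] else if z = x2 then ![1,0,1]
    else if z = x3 then ![0,1,1] else ![1,1,1] with hf
  have hfv0 : f v0 = ![0,0,0] := by simp [hf]
  have hfa : f a = ![1,0,0] := by simp [hf, hv0a.ne']
  have hfb : f b = ![0,1,0] := by simp [hf, hv0b.ne', Ne.symm hab]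
  have hfc : f c = ![0,0,1] := by simp [hf, hv0c.ne', Ne.symm hac, Ne.symm hbc]
  have hfx1 : f x1 = ![1,1,0] := by simp [hf, hx1v0, hx1a, hx1b, hx1c]
  have hfx2 : f x2 = ![1,0,1] := by simp [hf, hx2v0, hx2a, hx2b, hx2c, Ne.symm hx1x2]
  have hfx3 : f x3 = ![0,1,1] := by
    simp [hf, hx3v0, hx3a, hx3b, hx3c, Ne.symm hx1x3, Ne.symm hx2x3]
  have hfw : f w = ![1,1,1] := by
    simp [hf, hwv0, hwa, hwb, hwc, hx1w.ne', hx2w.ne', hx3w.ne']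
  have hinj : Function.Injective f := by
    intro p q h
    rcases hall p with rfl | rfl | rfl | rfl | rfl | rfl | rfl | rfl <;>
      rcases hall q with rfl | rfl | rfl | rfl | rfl | rfl | rfl | rfl <;>
      simp only [hfv0, hfa, hfb, hfc, hfx1, hfx2, hfx3, hfw] at h <;>
      first | rfl | exact absurd h (by decide)
  have hcard : Fintype.card V = Fintype.card (Fin 3 → ZMod 2) := by
    have huniv : (Finset.univ : Finset V) = {v0, a, b, c, x1, x2, x3, w} := by
      symm; apply Finset.eq_univ_iff_forall.mpr
      intro z
      rcases hall z with rfl | rfl | rfl | rfl | rfl | rfl | rfl | rfl <;> simp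
    rw [← Finset.card_univ, huniv]
    rw [Finset.card_insert_of_notMem (by
        simp only [Finset.mem_insert, Finset.mem_singleton, not_or]
        exact ⟨hv0a.ne, hv0b.ne, hv0c.ne, Ne.symm hx1v0, Ne.symm hx2v0, Ne.symm hx3v0,
          Ne.symm hwv0⟩),
      Finset.card_insert_of_notMem (by
        simp only [Finset.mem_insert, Finset.mem_singleton, not_or]
        exact ⟨hab, hac, Ne.symm hx1a, Ne.symm hx2a, Ne.symm hx3a, Ne.symm hwa⟩),
      Finset.card_insert_of_notMem (by
        simp only [Finset.mem_insert, Finset.mem_singleton, not_or]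
        exact ⟨hbc, Ne.symm hx1b, Ne.symm hx2b, Ne.symm hx3b, Ne.symm hwb⟩),
      Finset.card_insert_of_notMem (by
        simp only [Finset.mem_insert, Finset.mem_singleton, not_or]
        exact ⟨Ne.symm hx1c, Ne.symm hx2c, Ne.symm hx3c, Ne.symm hwc⟩),
      Finset.card_insert_of_notMem (by
        simp only [Finset.mem_insert, Finset.mem_singleton, not_or]
        exact ⟨hx1x2, hx1x3, hx1w.ne⟩),
      Finset.card_insert_of_notMem (by
        simp only [Finset.mem_insert, Finset.mem_singleton, not_or]
        exact ⟨hx2x3, hx2w.ne⟩),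
      Finset.card_insert_of_notMem (by
        simp only [Finset.mem_singleton]
        exact hx3w.ne),
      Finset.card_singleton]
    decide
  have hbij : Function.Bijective f :=
    (Fintype.bijective_iff_injective_and_card f).mpr ⟨hinj, hcard⟩
  refine ⟨⟨Equiv.ofBijective f hbij, ?_⟩⟩
  intro p q
  simp only [Equiv.ofBijective_apply]
  rcases hall p with rfl | rfl | rfl | rfl | rfl | rfl | rfl | rfl <;>
    rcases hall q with rfl | rfl | rfl | rfl | rfl | rfl | rfl | rfl <;>
    simp only [hfv0, hfa, hfb, hfc, hfx1, hfx2, hfx3, hfw] <;>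
    first
    | exact iff_of_true (by simp only [hypercubeGraph]; decide)
        (by first | assumption | exact SimpleGraph.Adj.symm (by assumption))
    | exact iff_of_false (by simp only [hypercubeGraph]; decide)
        (by first
            | exact G.irrefl
            | assumption
            | exact fun h => absurd h.symm (by assumption))

/-- If `G^φ` is a 3-regular connected mixed graph whose Hermitian-adjacency matrix `H`
satisfies `H² = 3I`, then the underlying graph `G` is isomorphic to `K₄` or to the
hypercube `Q₃`. -/
theorem underlying_graph_K4_or_Q3 {V : Type*} [Fintype V] [DecidableEq V]
    (G : SimpleGraph V) [DecidableRel G.Adj]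
    (hreg : ∀ v : V, G.degree v = 3) (hconn : G.Connected)
    (H : Matrix V V ℂ) (hH : H.IsHermitian)
    (hadj : ∀ u v, G.Adj u v → H u v ∈ ({1, Complex.I, -Complex.I} : Set ℂ))
    (hnadj : ∀ u v, ¬ G.Adj u v → H u v = 0)
    (hsq : H ^ 2 = (3 : ℂ) • (1 : Matrix V V ℂ)) :
    Nonempty (G ≃g SimpleGraph.completeGraph (Fin 4)) ∨ Nonempty (G ≃g hypercubeGraph 3) := by
  have hP := even_common G H hadj hnadj hsq
  by_cases hA : ∃ p q r : V, G.Adj p q ∧ G.Adj p r ∧ G.Adj q r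
  · obtain ⟨p, q, r, h1, h2, h3⟩ := hA
    exact Or.inl (caseA G hreg hconn hP h1 h2 h3)
  · push_neg at hA
    exact Or.inr (caseB G hreg hconn hP hA)
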